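/- Let (i₁,j₁),…,(i_l,j_l) be pairs of natural numbers with j_h < i_h for each h. Then for all coefficient sequences a, b: D(a (∗_{i₁,j₁}⋯∗_{i_l,j_l}) b) = (D a) (∗_{i₁+1,j₁+1}⋯∗_{i_l+1,j_l+1}) b + a (∗_{i₁+1,j₁}⋯∗_{i_l+1,j_l}∗_{1,0}) (D b). -/

import Mathlib

open Finset

/-- The ψ-factorial: ψₙ! = ψ₁ψ₂⋯ψₙ, with ψ₀! = 1. -/
noncomputable def psiFact (ψ : ℕ → ℂ) : ℕ → ℂ
  | 0 => 1
  | n + 1 => psiFact ψ n * ψ (n + 1)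

/-- The ψ-binomial coefficient binomψ(n,k) = ψₙ!/(ψₖ!·ψ_{n−k}!). -/
noncomputable def psiBinom (ψ : ℕ → ℂ) (n k : ℕ) : ℂ :=
  psiFact ψ n / (psiFact ψ k * psiFact ψ (n - k))

/-- The Fontané numbers F(n,k) = (ψₙ − ψₖ)/ψ_{n−k}. -/
noncomputable def Fker (ψ : ℕ → ℂ) (n k : ℕ) : ℂ :=
  (ψ n - ψ k) / ψ (n - k)

/-- The concatenated Fontané product ∗_{i₁,j₁}⋯∗_{i_l,j_l} indexed by a list of pairs. -/
noncomputable def fontaneL (ψ : ℕ → ℂ) (L : List (ℕ × ℕ)) (a b : ℕ → ℂ) (n : ℕ) : ℂ :=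
  ∑ k ∈ Finset.range (n + 1),
    (L.map fun p => Fker ψ (n + p.1) (k + p.2)).prod * psiBinom ψ n k * a k * b (n - k)

/-- The ψ-derivative on coefficient sequences: the shift (D a)ₙ = a_{n+1}. -/
def Dpsi (a : ℕ → ℂ) (n : ℕ) : ℂ := a (n + 1)

lemma auxdiv (A N K κ M μ : ℂ) (hK : K ≠ 0) (hκ : κ ≠ 0) (hM : M ≠ 0) (hμ : μ ≠ 0) :
    A*N/((K*κ)*(M*μ)) = A/(K*(M*μ)) + (N-κ)/μ * (A/((K*κ)*M)) := by
  rw [div_mul_div_comm, div_add_div _ _ (by simp [hK, hM, hμ]) (by simp [hK, hκ, hM, hμ]),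
    div_eq_div_iff (by simp [hK, hκ, hM, hμ]) (by simp [hK, hκ, hM, hμ])]
  ring

lemma psiFact_ne_zero (ψ : ℕ → ℂ) (hψ : ∀ n : ℕ, 1 ≤ n → ψ n ≠ 0) (n : ℕ) :
    psiFact ψ n ≠ 0 := by
  induction n with
  | zero => simp [psiFact]
  | succ n ih => exact mul_ne_zero ih (hψ _ (by omega))

lemma key (ψ : ℕ → ℂ) (hψ0 : ψ 0 = 0) (hψ : ∀ n : ℕ, 1 ≤ n → ψ n ≠ 0) (n k : ℕ) (hk : k ≤ n) :
    psiBinom ψ (n+1) (k+1) = psiBinom ψ n k + Fker ψ (n+1) (k+1) * psiBinom ψ n (k+1) := by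
  have hf := psiFact_ne_zero ψ hψ
  rcases eq_or_lt_of_le hk with rfl | hlt
  · simp only [psiBinom, Fker, Nat.sub_self, psiFact, mul_one, sub_self, hψ0, zero_div,
      zero_mul, add_zero]
    rw [div_self (mul_ne_zero (hf k) (hψ (k+1) (by omega))), div_self (hf k)]
  · obtain ⟨m, rfl⟩ : ∃ m, n = k + 1 + m := ⟨n - k - 1, by omega⟩
    have h1 : k + 1 + m + 1 - (k + 1) = m + 1 := by omega
    have h2 : k + 1 + m - k = m + 1 := by omega
    have h3 : k + 1 + m - (k + 1) = m := by omega
    simp only [psiBinom, Fker, h1, h2, h3]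
    have e1 : psiFact ψ (k + 1 + m + 1) = psiFact ψ (k + 1 + m) * ψ (k + 1 + m + 1) := rfl
    have e2 : psiFact ψ (k + 1) = psiFact ψ k * ψ (k + 1) := rfl
    have e3 : psiFact ψ (m + 1) = psiFact ψ m * ψ (m + 1) := rfl
    rw [e1, e2, e3]
    exact auxdiv _ _ _ _ _ _ (hf k) (hψ _ (by omega)) (hf m) (hψ _ (by omega))

lemma key0 (ψ : ℕ → ℂ) (hψ0 : ψ 0 = 0) (hψ : ∀ n : ℕ, 1 ≤ n → ψ n ≠ 0) (n : ℕ) :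
    psiBinom ψ (n+1) 0 = Fker ψ (n+1) 0 * psiBinom ψ n 0 := by
  have hf := psiFact_ne_zero ψ hψ
  simp only [psiBinom, Fker, hψ0, Nat.sub_zero, psiFact, mul_one, one_mul, sub_zero]
  rw [div_self (mul_ne_zero (hf n) (hψ (n+1) (by omega))), div_self (hf n),
    div_self (hψ (n+1) (by omega)), one_mul]

/-- Leibniz rule for the concatenated Fontané products. -/
theorem Dpsi_fontaneL (ψ : ℕ → ℂ) (hψ0 : ψ 0 = 0) (hψ1 : ψ 1 = 1) (hψ : ∀ n : ℕ, 1 ≤ n → ψ n ≠ 0)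
    (L : List (ℕ × ℕ)) (hL : ∀ p ∈ L, p.2 < p.1) (a b : ℕ → ℂ) (n : ℕ) :
    Dpsi (fontaneL ψ L a b) n
      = fontaneL ψ (L.map fun p => (p.1 + 1, p.2 + 1)) (Dpsi a) b n
        + fontaneL ψ ((L.map fun p => (p.1 + 1, p.2)) ++ [(1, 0)]) a (Dpsi b) n := by
  have hf := psiFact_ne_zero ψ hψ
  simp only [Dpsi, fontaneL, List.map_append, List.prod_append, List.map_map,
    List.map_cons, List.map_nil, List.prod_cons, List.prod_nil]
  have hm1 : ∀ x : ℕ, List.map ((fun p => Fker ψ (n + p.1) (x + p.2)) ∘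
        fun p : ℕ × ℕ => (p.1 + 1, p.2 + 1)) L
      = List.map (fun p => Fker ψ (n + 1 + p.1) (x + 1 + p.2)) L := by
    intro x
    apply List.map_congr_left
    intro p _
    show Fker ψ (n + (p.1 + 1)) (x + (p.2 + 1)) = _
    rw [show n + (p.1 + 1) = n + 1 + p.1 by omega, show x + (p.2 + 1) = x + 1 + p.2 by omega]
  have hm2 : ∀ x : ℕ, List.map ((fun p => Fker ψ (n + p.1) (x + p.2)) ∘
        fun p : ℕ × ℕ => (p.1 + 1, p.2)) L
      = List.map (fun p => Fker ψ (n + 1 + p.1) (x + p.2)) L := by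
    intro x
    apply List.map_congr_left
    intro p _
    show Fker ψ (n + (p.1 + 1)) (x + p.2) = _
    rw [show n + (p.1 + 1) = n + 1 + p.1 by omega]
  simp only [hm1, hm2]
  set G : ℕ → ℂ := fun k =>
    (List.map (fun p => Fker ψ (n + 1 + p.1) (k + p.2)) L).prod *
      (Fker ψ (n + 1) (k + 0) * 1) * psiBinom ψ n k * a k * b (n - k + 1) with hG
  have hGtop : G (n + 1) = 0 := by
    simp [hG, Fker, sub_self, zero_div]
  have step2 : ∑ x ∈ Finset.range (n + 1), G x
      = ∑ x ∈ Finset.range (n + 1), G (x + 1) + G 0 := by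
    have h1 : ∑ x ∈ Finset.range (n + 1), G x = ∑ x ∈ Finset.range (n + 1 + 1), G x := by
      rw [Finset.sum_range_succ G (n + 1), hGtop, add_zero]
    rw [h1, Finset.sum_range_succ']
  rw [step2, Finset.sum_range_succ' (fun k =>
    (List.map (fun p => Fker ψ (n + 1 + p.1) (k + p.2)) L).prod * psiBinom ψ (n + 1) k *
      a k * b (n + 1 - k)) (n + 1)]
  have h0 : (List.map (fun p => Fker ψ (n + 1 + p.1) (0 + p.2)) L).prod *
        psiBinom ψ (n + 1) 0 * a 0 * b (n + 1 - 0) = G 0 := by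
    rw [hG]
    simp only [Nat.sub_zero, Nat.add_zero]
    rw [key0 ψ hψ0 hψ n]
    ring
  have hpt : ∀ x ∈ Finset.range (n + 1),
      (List.map (fun p => Fker ψ (n + 1 + p.1) (x + 1 + p.2)) L).prod *
          psiBinom ψ (n + 1) (x + 1) * a (x + 1) * b (n + 1 - (x + 1))
        = (List.map (fun p => Fker ψ (n + 1 + p.1) (x + 1 + p.2)) L).prod * psiBinom ψ n x *
            a (x + 1) * b (n - x) + G (x + 1) := by
    intro x hx
    have hxn : x ≤ n := by simpa using Nat.lt_succ_iff.mp (Finset.mem_range.mp hx)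
    rw [hG]
    simp only [show n + 1 - (x + 1) = n - x by omega]
    rcases eq_or_lt_of_le hxn with rfl | hlt
    · have hFk : Fker ψ (x + 1) (x + 1 + 0) = 0 := by
        simp [Fker, sub_self, zero_div]
      rw [hFk]
      have hB : psiBinom ψ (x + 1) (x + 1) = psiBinom ψ x x := by
        simp only [psiBinom, Nat.sub_self]
        show psiFact ψ x * ψ (x + 1) / (psiFact ψ x * ψ (x + 1) * psiFact ψ 0) = _
        rw [show psiFact ψ 0 = (1 : ℂ) from rfl, mul_one, mul_one,
          div_self (mul_ne_zero (psiFact_ne_zero ψ hψ x) (hψ (x + 1) (by omega))),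
          div_self (psiFact_ne_zero ψ hψ x)]
      rw [hB]
      ring
    · rw [show n - (x + 1) + 1 = n - x by omega, show x + 1 + 0 = x + 1 by omega,
        key ψ hψ0 hψ n x hxn]
      ring
  rw [Finset.sum_congr rfl hpt, Finset.sum_add_distrib, h0]
  ring
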